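/- If X is a second-countable π-space, then for every nonempty Polish space Y there exists a continuous open surjection from X onto Y. -/

import Mathlib

open Set Topology

namespace PiSpacePaper

/-- The restriction `p↾n` of `p : ℕ → ℕ`, as a list of length `n`. -/
def restrictSeq (p : ℕ → ℕ) (n : ℕ) : List ℕ := (List.range n).map p

/-- The basic clopen set `S_a` of the Baire space. -/
def cyl (a : List ℕ) : Set (ℕ → ℕ) := {p | restrictSeq p a.length = a}

/-- The fruit `⋂ n, V (p↾n)` of a branch `p` in a Souslin scheme `V`. -/
def fruit {X : Type*} (V : List ℕ → Set X) (p : ℕ → ℕ) : Set X :=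
  ⋂ n : ℕ, V (restrictSeq p n)

/-- A Souslin scheme `V` covers the set `s`. -/
def Covers {X : Type*} (V : List ℕ → Set X) (s : Set X) : Prop :=
  V [] = s ∧ ∀ a : List ℕ, V a = ⋃ n : ℕ, V (a ++ [n])

/-- A Souslin scheme `V` partitions the set `s`. -/
def Partitions {X : Type*} (V : List ℕ → Set X) (s : Set X) : Prop :=
  Covers V s ∧ ∀ (a : List ℕ) (n m : ℕ), n ≠ m → V (a ++ [n]) ∩ V (a ++ [m]) = ∅

/-- A Souslin scheme is complete iff all fruits are nonempty. -/
def Complete {X : Type*} (V : List ℕ → Set X) : Prop :=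
  ∀ p : ℕ → ℕ, (fruit V p).Nonempty

/-- A Souslin scheme has strict branches iff every fruit is a singleton. -/
def StrictBranches {X : Type*} (V : List ℕ → Set X) : Prop :=
  ∀ p : ℕ → ℕ, ∃ x : X, fruit V p = {x}

/-- A Souslin scheme is open iff all its members are open sets. -/
def OpenScheme {X : Type*} [TopologicalSpace X] (V : List ℕ → Set X) : Prop :=
  ∀ a : List ℕ, IsOpen (V a)

/-- `flesh V = ⋃ a, V a`. -/
def flesh {X : Type*} (V : List ℕ → Set X) : Set X := ⋃ a : List ℕ, V a

/-- `branches V x = {q ∈ ℕ^ℕ : x ∈ fruit V q}`. -/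
def branches {X : Type*} (V : List ℕ → Set X) (x : X) : Set (ℕ → ℕ) :=
  {q | x ∈ fruit V q}

/-- A family `γ` of subsets is a π-net for a space: all members are nonempty and every
nonempty open set contains a member. -/
def IsPiNet {X : Type*} [TopologicalSpace X] (γ : Set (Set X)) : Prop :=
  (∀ G ∈ γ, G.Nonempty) ∧
  ∀ U : Set X, IsOpen U → U.Nonempty → ∃ G ∈ γ, G ⊆ U

/-- A family `γ` of subsets is a π-base for a space: all members are nonempty open sets
and every nonempty open set contains a member. -/
def IsPiBase {X : Type*} [TopologicalSpace X] (γ : Set (Set X)) : Prop :=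
  (∀ G ∈ γ, IsOpen G ∧ G.Nonempty) ∧
  ∀ U : Set X, IsOpen U → U.Nonempty → ∃ G ∈ γ, G ⊆ U

/-- A π-space: there is an open Souslin scheme that partitions the space, has strict
branches, and whose family of members is a π-base. -/
def IsPiSpace (X : Type*) [TopologicalSpace X] : Prop :=
  ∃ V : List ℕ → Set X, OpenScheme V ∧ Partitions V Set.univ ∧ StrictBranches V ∧
    IsPiBase {S : Set X | ∃ a : List ℕ, S = V a}

/-- A Lusin π-base for a space. -/
def IsLusinPiBase {X : Type*} [TopologicalSpace X] (V : List ℕ → Set X) : Prop :=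
  OpenScheme V ∧ Partitions V Set.univ ∧ StrictBranches V ∧
  ∀ (x : X) (U : Set X), IsOpen U → x ∈ U →
    ∃ (a : List ℕ) (n : ℕ), x ∈ V a ∧ (⋃ i : ℕ, ⋃ _ : n ≤ i, V (a ++ [i])) ⊆ U

/-- A map is quasi-open iff the image of every nonempty open set has nonempty interior. -/
def IsQuasiOpen {X Y : Type*} [TopologicalSpace X] [TopologicalSpace Y] (f : X → Y) : Prop :=
  ∀ U : Set X, IsOpen U → U.Nonempty → (interior (f '' U)).Nonempty

/-- A π-net Souslin scheme on a space `X`: for every finite sequence `a`, the family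
`{V b : b ⊒ a}` is a π-net for the subspace `V a` of `X` (whose nonempty open sets are
exactly the nonempty sets `U ∩ V a` with `U` open in `X`). -/
def IsPiNetScheme {X : Type*} [TopologicalSpace X] (V : List ℕ → Set X) : Prop :=
  ∀ a : List ℕ,
    (∀ b : List ℕ, a <+: b → (V b).Nonempty) ∧
    ∀ U : Set X, IsOpen U → (U ∩ V a).Nonempty → ∃ b : List ℕ, a <+: b ∧ V b ⊆ U ∩ V a

/-- A π-base Souslin scheme on a space is an open π-net Souslin scheme. -/
def IsPiBaseScheme {X : Type*} [TopologicalSpace X] (V : List ℕ → Set X) : Prop :=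
  OpenScheme V ∧ IsPiNetScheme V

/-- A selector on a Souslin scheme `V`: a surjection of the Baire space onto `flesh V`
such that every fiber `f⁻¹(x)` is a dense subset of the subspace `branches V x` of the
Baire space. -/
def IsSelector {X : Type*} (V : List ℕ → Set X) (f : (ℕ → ℕ) → X) : Prop :=
  Set.range f = flesh V ∧
  ∀ x ∈ flesh V, f ⁻¹' {x} ⊆ branches V x ∧ branches V x ⊆ closure (f ⁻¹' {x})

/-- The topology `σ_{τ,f}` on the Baire space, generated by the subbase consisting of the
`τ`-preimages under `f` together with the basic sets `S_a`. -/
def sigmaTop {X : Type*} [TopologicalSpace X] (f : (ℕ → ℕ) → X) :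
    TopologicalSpace (ℕ → ℕ) :=
  TopologicalSpace.generateFrom
    ({S : Set (ℕ → ℕ) | ∃ U : Set X, IsOpen U ∧ S = f ⁻¹' U} ∪
      {S : Set (ℕ → ℕ) | ∃ a : List ℕ, S = cyl a})

/-- The Souslin scheme `V^g`, where `V^g_a = V_{g ∘ a}`. -/
def schemeComp {X : Type*} (V : List ℕ → Set X) (g : ℕ → ℕ) : List ℕ → Set X :=
  fun a => V (a.map g)

/-- A subset of the Baire space is dense-in-itself iff it has no isolated points. -/
def DenseInItself (B : Set (ℕ → ℕ)) : Prop :=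
  ∀ q ∈ B, q ∈ closure (B \ {q})

/-- `X` is a continuous open image of a π-space. -/
def IsContinuousOpenImageOfPiSpace (X : Type) [TopologicalSpace X] : Prop :=
  ∃ (Y : Type) (_ : TopologicalSpace Y) (f : Y → X),
    IsPiSpace Y ∧ Continuous f ∧ IsOpenMap f ∧ Function.Surjective f

/-- The topology `τ_N` on the Baire space generated by the sets `U \ A` with `U` open in
the Baire space and `A` nowhere dense in the Baire space. -/
def tauN : TopologicalSpace (ℕ → ℕ) :=
  TopologicalSpace.generateFrom
    {S : Set (ℕ → ℕ) | ∃ U A : Set (ℕ → ℕ), IsOpen U ∧ IsNowhereDense A ∧ S = U \ A}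
set_option linter.unusedSectionVars false
/-! ### Auxiliary development -/

section Aux


theorem restrictSeq_length' (p : ℕ → ℕ) (n : ℕ) : (restrictSeq p n).length = n := by
  simp [restrictSeq]

theorem restrictSeq_zero' (p : ℕ → ℕ) : restrictSeq p 0 = [] := rfl

theorem restrictSeq_succ' (p : ℕ → ℕ) (n : ℕ) :
    restrictSeq p (n + 1) = restrictSeq p n ++ [p n] := by
  simp [restrictSeq, List.range_succ]

theorem restrictSeq_prefix' (p : ℕ → ℕ) {m n : ℕ} (h : m ≤ n) :
    restrictSeq p m <+: restrictSeq p n := by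
  induction n with
  | zero => simp_all [restrictSeq]
  | succ n ih =>
    rcases Nat.lt_or_ge m (n + 1) with h' | h'
    · exact (ih (Nat.lt_succ_iff.mp h')).trans (by rw [restrictSeq_succ']; exact ⟨[p n], rfl⟩)
    · have : m = n + 1 := le_antisymm h h'
      subst this; exact List.prefix_refl _

variable {X : Type*} [TopologicalSpace X] {V : List ℕ → Set X}

theorem covers_append_subset (hC : Covers V Set.univ) (a : List ℕ) (l : List ℕ) :
    V (a ++ l) ⊆ V a := by
  induction l using List.reverseRecOn with
  | nil => simp
  | append_singleton l n ih =>
    have h1 : V ((a ++ l) ++ [n]) ⊆ V (a ++ l) := by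
      rw [hC.2 (a ++ l)]; exact Set.subset_iUnion (fun i => V ((a ++ l) ++ [i])) n
    rw [← List.append_assoc] at *
    exact h1.trans ih

theorem covers_prefix_subset (hC : Covers V Set.univ) {a b : List ℕ} (h : a <+: b) :
    V b ⊆ V a := by
  obtain ⟨l, rfl⟩ := h
  exact covers_append_subset hC a l

theorem partitions_same_length_disjoint (hP : Partitions V Set.univ) :
    ∀ n (a b : List ℕ), a.length = n → b.length = n → a ≠ b → V a ∩ V b = ∅ := by
  intro n
  induction n with
  | zero =>
    intro a b ha hb hne
    exact absurd (by rw [List.eq_nil_of_length_eq_zero ha, List.eq_nil_of_length_eq_zero hb])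
      hne
  | succ n ih =>
    intro a b ha hb hne
    rcases List.eq_nil_or_concat a with rfl | ⟨a', i, rfl⟩
    · simp at ha
    rcases List.eq_nil_or_concat b with rfl | ⟨b', j, rfl⟩
    · simp at hb
    simp only [List.concat_eq_append] at *
    simp only [List.length_append, List.length_singleton] at ha hb
    by_cases hab : a' = b'
    · subst hab
      have hij : i ≠ j := fun hij => hne (by rw [hij])
      exact hP.2 a' i j hij
    · have hd := ih a' b' (by omega) (by omega) hab
      apply Set.eq_empty_iff_forall_notMem.mpr
      intro x hx
      have : x ∈ V a' ∩ V b' :=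
        ⟨covers_append_subset hP.1 a' [i] hx.1, covers_append_subset hP.1 b' [j] hx.2⟩
      rw [hd] at this
      exact this

theorem strict_nonempty (hS : StrictBranches V) (a : List ℕ) : (V a).Nonempty := by
  set q : ℕ → ℕ := fun n => a.getD n 0 with hq
  have hres : restrictSeq q a.length = a := by
    apply List.ext_getElem (by simp [restrictSeq])
    intro i h1 h2
    simp [restrictSeq, hq, List.getD, List.getElem?_eq_getElem h2]
  obtain ⟨x, hx⟩ := hS q
  refine ⟨x, ?_⟩
  have hxf : x ∈ fruit V q := by rw [hx]; rfl
  have := Set.mem_iInter.mp hxf a.length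
  rwa [hres] at this

theorem exists_unique_child (hP : Partitions V Set.univ) {a : List ℕ} {x : X}
    (hx : x ∈ V a) : ∃! n : ℕ, x ∈ V (a ++ [n]) := by
  have : x ∈ ⋃ n : ℕ, V (a ++ [n]) := by rw [← hP.1.2 a]; exact hx
  obtain ⟨n, hn⟩ := Set.mem_iUnion.mp this
  refine ⟨n, hn, fun m hm => ?_⟩
  by_contra hne
  have := hP.2 a m n hne
  exact Set.eq_empty_iff_forall_notMem.mp this x ⟨hm, hn⟩

open Classical in
noncomputable def childOf (V : List ℕ → Set X) (a : List ℕ) (x : X) : ℕ :=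
  if h : ∃ n : ℕ, x ∈ V (a ++ [n]) then h.choose else 0

theorem childOf_spec (hP : Partitions V Set.univ) {a : List ℕ} {x : X} (hx : x ∈ V a) :
    x ∈ V (a ++ [childOf V a x]) := by
  obtain ⟨n, hn, -⟩ := exists_unique_child hP hx
  rw [childOf]
  rw [dif_pos (⟨n, hn⟩ : ∃ n : ℕ, x ∈ V (a ++ [n]))]
  exact (Exists.choose_spec (⟨n, hn⟩ : ∃ n : ℕ, x ∈ V (a ++ [n])))

/-- The finite branch approximations of a point. -/
noncomputable def brList (V : List ℕ → Set X) (x : X) : ℕ → List ℕ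
  | 0 => []
  | n + 1 => brList V x n ++ [childOf V (brList V x n) x]

/-- The branch of a point in a partitioning scheme. -/
noncomputable def phi (V : List ℕ → Set X) (x : X) : ℕ → ℕ :=
  fun n => childOf V (brList V x n) x

theorem restrictSeq_phi (x : X) (n : ℕ) : restrictSeq (phi V x) n = brList V x n := by
  induction n with
  | zero => rfl
  | succ n ih => rw [restrictSeq_succ', ih]; rfl

theorem mem_brList (hP : Partitions V Set.univ) (x : X) (n : ℕ) : x ∈ V (brList V x n) := by
  induction n with
  | zero => show x ∈ V []; rw [hP.1.1]; exact Set.mem_univ x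
  | succ n ih => exact childOf_spec hP ih

theorem mem_V_restrict_phi (hP : Partitions V Set.univ) (x : X) (n : ℕ) :
    x ∈ V (restrictSeq (phi V x) n) := by
  rw [restrictSeq_phi]; exact mem_brList hP x n

theorem phi_restrict_eq (hP : Partitions V Set.univ) {x : X} {a : List ℕ} (hx : x ∈ V a) :
    restrictSeq (phi V x) a.length = a := by
  by_contra hne
  have hd := partitions_same_length_disjoint hP a.length _ a
    (restrictSeq_length' _ _) rfl (fun h => hne h)
  exact Set.eq_empty_iff_forall_notMem.mp hd x
    ⟨mem_V_restrict_phi hP x a.length, hx⟩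

/-- π-base refinement: below every node one finds a member of the scheme inside any
open set meeting that node. -/
theorem exists_extension_subset (hP : Partitions V Set.univ) (hS : StrictBranches V)
    (hPB : IsPiBase {S : Set X | ∃ a : List ℕ, S = V a}) (hO : OpenScheme V)
    (a : List ℕ) {U : Set X} (hU : IsOpen U) (hne : (U ∩ V a).Nonempty) :
    ∃ b : List ℕ, a <+: b ∧ V b ⊆ U := by
  obtain ⟨G, hG, hGsub⟩ := hPB.2 (U ∩ V a) (hU.inter (hO a)) hne
  obtain ⟨c, rfl⟩ := hG
  have hGne : (V c).Nonempty := (hPB.1 _ ⟨c, rfl⟩).2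
  obtain ⟨x, hxc⟩ := hGne
  have hxa : x ∈ V a := (hGsub hxc).2
  refine ⟨restrictSeq (phi V x) (max a.length c.length), ?_, ?_⟩
  · have hpre := restrictSeq_prefix' (phi V x) (le_max_left a.length c.length)
    rwa [phi_restrict_eq hP hxa] at hpre
  · have h1 : restrictSeq (phi V x) c.length <+: restrictSeq (phi V x) (max a.length c.length) :=
      restrictSeq_prefix' _ (le_max_right _ _)
    refine (covers_prefix_subset hP.1 h1).trans ?_
    rw [phi_restrict_eq hP hxc]
    exact fun y hy => (hGsub hy).1

open Classical in
noncomputable def wit (V : List ℕ → Set X) (U : Set X) (a : List ℕ) : List ℕ :=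
  if h : ∃ b : List ℕ, a <+: b ∧ V b ⊆ U then h.choose.drop a.length else []

theorem wit_spec {U : Set X} {a : List ℕ} (h : ∃ b : List ℕ, a <+: b ∧ V b ⊆ U) :
    V (a ++ wit V U a) ⊆ U := by
  rw [wit, dif_pos h]
  obtain ⟨⟨l, hl⟩, hsub⟩ := h.choose_spec
  rw [← hl, List.drop_left]
  rw [hl]; exact hsub

section YSide
variable {Y : Type*} [MetricSpace Y] [SecondCountableTopology Y]

theorem exists_strongCover {Q : Set Y} (hQ : IsOpen Q) (hne : Q.Nonempty) {ε : ℝ}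
    (hε : 0 < ε) :
    ∃ C : ℕ → Set Y, (∀ n, IsOpen (C n)) ∧ (∀ n, (C n).Nonempty) ∧
      (∀ n, closure (C n) ⊆ Q) ∧ (∀ n, Bornology.IsBounded (C n)) ∧
      (∀ n, Metric.diam (C n) ≤ ε) ∧ Q ⊆ ⋃ n, C n := by
  have hrad : ∀ q : Q, ∃ r : ℝ, 0 < r ∧ r ≤ ε / 3 ∧ closure (Metric.ball (q : Y) r) ⊆ Q := by
    rintro ⟨q, hq⟩
    obtain ⟨r, hr, hball⟩ := Metric.isOpen_iff.mp hQ q hq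
    refine ⟨min (ε / 3) (r / 2), by positivity, min_le_left _ _, ?_⟩
    have h1 : closure (Metric.ball q (min (ε / 3) (r / 2))) ⊆
        Metric.closedBall q (min (ε / 3) (r / 2)) :=
      closure_minimal Metric.ball_subset_closedBall Metric.isClosed_closedBall
    refine h1.trans ?_
    refine (Metric.closedBall_subset_ball ?_).trans hball
    have : 0 < r := hr
    calc min (ε / 3) (r / 2) ≤ r / 2 := min_le_right _ _
      _ < r := by linarith
  choose r hr0 hrε hrcl using hrad
  set s : Q → Set Y := fun q => Metric.ball (q : Y) (r q) with hs
  obtain ⟨T, hTc, hTU⟩ := TopologicalSpace.isOpen_iUnion_countable s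
    (fun q => Metric.isOpen_ball)
  have hcov : Q ⊆ ⋃ i ∈ T, s i := by
    rw [hTU]
    intro q hq
    exact Set.mem_iUnion.mpr ⟨⟨q, hq⟩, Metric.mem_ball_self (hr0 _)⟩
  have hTne : T.Nonempty := by
    obtain ⟨q, hq⟩ := hne
    obtain ⟨i, hi, -⟩ := Set.mem_iUnion₂.mp (hcov hq)
    exact ⟨i, hi⟩
  obtain ⟨u, hu⟩ := hTc.exists_eq_range hTne
  refine ⟨fun n => s (u n), fun n => Metric.isOpen_ball, fun n => ⟨_, Metric.mem_ball_self (hr0 _)⟩,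
    fun n => hrcl _, fun n => Metric.isBounded_ball, fun n => ?_, ?_⟩
  · calc Metric.diam (s (u n)) ≤ 2 * r (u n) := Metric.diam_ball (le_of_lt (hr0 _))
      _ ≤ 2 * (ε / 3) := by have := hrε (u n); linarith
      _ ≤ ε := by linarith
  · refine hcov.trans ?_
    intro y hy
    obtain ⟨i, hi, hyi⟩ := Set.mem_iUnion₂.mp hy
    have : i ∈ Set.range u := by rw [← hu]; exact hi
    obtain ⟨n, rfl⟩ := this
    exact Set.mem_iUnion.mpr ⟨n, hyi⟩

open Classical in
noncomputable def sCov (Q : Set Y) (t : ℕ) (n : ℕ) : Set Y :=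
  if h : IsOpen Q ∧ Q.Nonempty then
    (exists_strongCover h.1 h.2 (show (0:ℝ) < (1/2)^t by positivity)).choose ((Nat.unpair n).1)
  else Q

theorem sCov_spec {Q : Set Y} (hQ : IsOpen Q) (hne : Q.Nonempty) (t : ℕ) :
    (∀ n, IsOpen (sCov Q t n)) ∧ (∀ n, (sCov Q t n).Nonempty) ∧
      (∀ n, closure (sCov Q t n) ⊆ Q) ∧ (∀ n, Bornology.IsBounded (sCov Q t n)) ∧
      (∀ n, Metric.diam (sCov Q t n) ≤ (1/2)^t) ∧
      (∀ y ∈ Q, ∀ bad : ℕ, ∃ n, n ≠ bad ∧ y ∈ sCov Q t n) := by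
  have h : IsOpen Q ∧ Q.Nonempty := ⟨hQ, hne⟩
  have hdef : ∀ n, sCov Q t n =
      (exists_strongCover h.1 h.2 (show (0:ℝ) < (1/2)^t by positivity)).choose
        ((Nat.unpair n).1) := by
    intro n; rw [sCov, dif_pos h]
  obtain ⟨h1, h2, h3, h4, h5, h6⟩ :=
    (exists_strongCover h.1 h.2 (show (0:ℝ) < (1/2)^t by positivity)).choose_spec
  refine ⟨fun n => by rw [hdef]; exact h1 _, fun n => by rw [hdef]; exact h2 _,
    fun n => by rw [hdef]; exact h3 _, fun n => by rw [hdef]; exact h4 _,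
    fun n => by rw [hdef]; exact h5 _, ?_⟩
  intro y hy bad
  obtain ⟨m, hm⟩ := Set.mem_iUnion.mp (h6 hy)
  rcases eq_or_ne (Nat.pair m 0) bad with hb | hb
  · refine ⟨Nat.pair m 1, ?_, ?_⟩
    · rw [← hb]; intro hcontra
      have := Nat.pair_eq_pair.mp hcontra
      simp at this
    · rw [hdef, Nat.unpair_pair]; exact hm
  · exact ⟨Nat.pair m 0, hb, by rw [hdef, Nat.unpair_pair]; exact hm⟩

theorem sCov_subset {Q : Set Y} (hQ : IsOpen Q) (hne : Q.Nonempty) (t n : ℕ) :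
    sCov Q t n ⊆ Q :=
  subset_closure.trans ((sCov_spec hQ hne t).2.2.1 n)

end YSide

section Machine
variable {X : Type*} [TopologicalSpace X]
variable {Y : Type*} [MetricSpace Y] [CompleteSpace Y] [SecondCountableTopology Y] [Nonempty Y]

/-- Modes of the construction: capable of starting a witness path, inside a path, or
cooling down. -/
inductive SMode where
  | cap : SMode
  | busy : List ℕ → SMode
  | cool : SMode

/-- State attached to a node of the tree. -/
structure MSt (Y : Type*) where
  node : List ℕ
  W : Set Y
  t : ℕ
  mode : SMode

noncomputable def mkStrong (s : MSt Y) (n : ℕ) : MSt Y :=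
  ⟨s.node ++ [n], sCov s.W (s.t + 1) n, s.t + 1, SMode.cap⟩

noncomputable def pathChild (s : MSt Y) (tl : List ℕ) (n : ℕ) : MSt Y :=
  ⟨s.node ++ [n], s.W, s.t, if tl = [] then SMode.cool else SMode.busy tl⟩

open Classical in
noncomputable def mStep (V : List ℕ → Set X) (B : ℕ → Set X) (s : MSt Y) (n : ℕ) : MSt Y :=
  match s.mode with
  | SMode.cap =>
    if (B s.t ∩ V s.node).Nonempty then
      match wit V (B s.t) s.node with
      | [] => mkStrong s n
      | h :: tl => if n = h then pathChild s tl n else mkStrong s n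
    else mkStrong s n
  | SMode.busy e =>
    match e with
    | [] => mkStrong s n
    | h :: tl => if n = h then pathChild s tl n else mkStrong s n
  | SMode.cool => mkStrong s n

variable (V : List ℕ → Set X) (B : ℕ → Set X)

noncomputable def sigRev : List ℕ → MSt Y
  | [] => ⟨[], Set.univ, 0, SMode.cap⟩
  | n :: r => mStep V B (sigRev r) n

noncomputable def sig (a : List ℕ) : MSt Y := sigRev V B a.reverse

theorem sig_nil : sig V B (Y := Y) ([] : List ℕ) = ⟨[], Set.univ, 0, SMode.cap⟩ := rfl

theorem sig_append (a : List ℕ) (n : ℕ) :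
    sig V B (Y := Y) (a ++ [n]) = mStep V B (sig V B a) n := by
  show sigRev V B ((a ++ [n]).reverse) = _
  rw [List.reverse_append]
  rfl

theorem mStep_disj (s : MSt Y) (n : ℕ) :
    mStep V B s n = mkStrong s n ∨ ∃ tl, mStep V B s n = pathChild s tl n := by
  obtain ⟨nd, W, t, md⟩ := s
  cases md with
  | cap =>
    simp only [mStep]
    split
    · rcases hw : wit V (B t) nd with _ | ⟨h, tl⟩
      · exact Or.inl rfl
      · by_cases hn : n = h
        · subst hn; exact Or.inr ⟨tl, by simp⟩
        · simp [hn]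
    · exact Or.inl rfl
  | busy e =>
    rcases e with _ | ⟨h, tl⟩
    · exact Or.inl rfl
    · by_cases hn : n = h
      · subst hn; exact Or.inr ⟨tl, by simp [mStep]⟩
      · simp [mStep, hn]
  | cool => exact Or.inl rfl

theorem mStep_node (s : MSt Y) (n : ℕ) : (mStep V B s n).node = s.node ++ [n] := by
  rcases mStep_disj V B s n with h | ⟨tl, h⟩ <;> rw [h] <;> rfl

theorem sig_node : ∀ a : List ℕ, (sig V B (Y := Y) a).node = a := by
  intro a
  induction a using List.reverseRecOn with
  | nil => rfl
  | append_singleton a n ih => rw [sig_append, mStep_node, ih]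

/-- Basic state invariant. -/
def GoodSt (s : MSt Y) : Prop :=
  IsOpen s.W ∧ s.W.Nonempty ∧
    (1 ≤ s.t → Bornology.IsBounded s.W ∧ Metric.diam s.W ≤ (1/2 : ℝ) ^ s.t)

theorem goodSt_step {s : MSt Y} (hs : GoodSt s) (n : ℕ) : GoodSt (mStep V B s n) := by
  rcases mStep_disj V B s n with h | ⟨tl, h⟩ <;> rw [h]
  · obtain ⟨h1, h2, h3, h4, h5, -⟩ := sCov_spec hs.1 hs.2.1 (s.t + 1)
    exact ⟨h1 n, h2 n, fun _ => ⟨h4 n, h5 n⟩⟩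
  · exact hs

theorem sig_good : ∀ a : List ℕ, GoodSt (sig V B (Y := Y) a) := by
  intro a
  induction a using List.reverseRecOn with
  | nil =>
    rw [sig_nil]
    exact ⟨isOpen_univ, Set.univ_nonempty, fun h => by simp at h⟩
  | append_singleton a n ih => rw [sig_append]; exact goodSt_step V B ih n

theorem step_W_subset {s : MSt Y} (hs : GoodSt s) (n : ℕ) :
    (mStep V B s n).W ⊆ s.W := by
  rcases mStep_disj V B s n with h | ⟨tl, h⟩ <;> rw [h]
  · exact sCov_subset hs.1 hs.2.1 _ _
  · exact subset_rfl

theorem sig_W_anti {a b : List ℕ} (hab : a <+: b) :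
    (sig V B (Y := Y) b).W ⊆ (sig V B a).W := by
  obtain ⟨l, rfl⟩ := hab
  induction l using List.reverseRecOn with
  | nil => simp
  | append_singleton l n ih =>
    rw [← List.append_assoc, sig_append]
    exact (step_W_subset V B (sig_good V B _) n).trans ih

/-- Termination measure for busy stretches. -/
noncomputable def nuSt (s : MSt Y) : ℕ :=
  match s.mode with
  | SMode.cap => (wit V (B s.t) s.node).length + 2
  | SMode.busy e => e.length + 1
  | SMode.cool => 1

theorem nuSt_pathChild_lt_cap (s : MSt Y) (n hd : ℕ) (tl : List ℕ)
    (hmd : s.mode = SMode.cap) (hw : wit V (B s.t) s.node = hd :: tl) :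
    nuSt V B (pathChild s tl n) < nuSt V B s := by
  have h1 : nuSt V B s = (hd :: tl).length + 2 := by
    simp only [nuSt, hmd, hw]
  have h2 : nuSt V B (pathChild s tl n) ≤ tl.length + 1 := by
    rcases tl with _ | ⟨u, ul⟩
    · simp [nuSt, pathChild]
    · simp [nuSt, pathChild]
  simp only [List.length_cons] at h1
  omega

theorem nuSt_pathChild_lt_busy (s : MSt Y) (n hd : ℕ) (tl : List ℕ)
    (hmd : s.mode = SMode.busy (hd :: tl)) :
    nuSt V B (pathChild s tl n) < nuSt V B s := by
  have h1 : nuSt V B s = (hd :: tl).length + 1 := by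
    simp only [nuSt, hmd]
  have h2 : nuSt V B (pathChild s tl n) ≤ tl.length + 1 := by
    rcases tl with _ | ⟨u, ul⟩
    · simp [nuSt, pathChild]
    · simp [nuSt, pathChild]
  simp only [List.length_cons] at h1
  omega

theorem mStep_t_or (s : MSt Y) (n : ℕ) :
    ((mStep V B s n).t = s.t ∧ (mStep V B s n).W = s.W ∧
        nuSt V B (mStep V B s n) < nuSt V B s) ∨
      ((mStep V B s n).t = s.t + 1 ∧ (mStep V B s n).mode = SMode.cap ∧
        (mStep V B s n).W = sCov s.W (s.t + 1) n) := by
  obtain ⟨nd, W, t, md⟩ := s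
  cases md with
  | cap =>
    simp only [mStep]
    split
    · rcases hw : wit V (B t) nd with _ | ⟨hd, tl⟩
      · exact Or.inr ⟨rfl, rfl, rfl⟩
      · by_cases hn : n = hd
        · subst hn
          simp only [if_pos rfl]
          exact Or.inl ⟨rfl, rfl, nuSt_pathChild_lt_cap V B _ n n tl rfl hw⟩
        · simp only [if_neg hn]
          exact Or.inr ⟨rfl, rfl, rfl⟩
    · exact Or.inr ⟨rfl, rfl, rfl⟩
  | busy e =>
    rcases e with _ | ⟨hd, tl⟩
    · exact Or.inr ⟨rfl, rfl, rfl⟩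
    · by_cases hn : n = hd
      · subst hn
        simp only [mStep, if_pos rfl]
        exact Or.inl ⟨rfl, rfl, nuSt_pathChild_lt_busy V B _ n n tl rfl⟩
      · simp only [mStep, if_neg hn]
        exact Or.inr ⟨rfl, rfl, rfl⟩
  | cool => exact Or.inr ⟨rfl, rfl, rfl⟩


theorem mStep_cover {s : MSt Y} (hs : GoodSt s) : s.W ⊆ ⋃ n : ℕ, (mStep V B s n).W := by
  classical
  obtain ⟨h1, h2, h3, h4, h5, h6⟩ := sCov_spec hs.1 hs.2.1 (s.t + 1)
  have hmk : ∀ n : ℕ, (mkStrong s n).W = sCov s.W (s.t + 1) n := fun n => rfl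
  have hstrongcase : (∀ n : ℕ, mStep V B s n = mkStrong s n) →
      s.W ⊆ ⋃ n : ℕ, (mStep V B s n).W := by
    intro hall y hy
    obtain ⟨n, -, hn⟩ := h6 y hy 0
    exact Set.mem_iUnion.mpr ⟨n, by rw [hall n, hmk]; exact hn⟩
  obtain ⟨nd, W, t, md⟩ := s
  cases md with
  | cap =>
    by_cases htrig : (B t ∩ V nd).Nonempty
    · rcases hw : wit V (B t) nd with _ | ⟨hd, tl⟩
      · refine hstrongcase (fun n => ?_)
        simp only [mStep, if_pos htrig, hw]
      · intro y hy
        refine Set.mem_iUnion.mpr ⟨hd, ?_⟩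
        have : mStep V B ⟨nd, W, t, SMode.cap⟩ hd =
            pathChild ⟨nd, W, t, SMode.cap⟩ tl hd := by
          simp [mStep, if_pos htrig, hw]
        rw [this]
        exact hy
    · refine hstrongcase (fun n => ?_)
      simp only [mStep, if_neg htrig]
  | busy e =>
    rcases e with _ | ⟨hd, tl⟩
    · exact hstrongcase (fun n => by simp only [mStep])
    · intro y hy
      refine Set.mem_iUnion.mpr ⟨hd, ?_⟩
      have : mStep V B ⟨nd, W, t, SMode.busy (hd :: tl)⟩ hd =
          pathChild ⟨nd, W, t, SMode.busy (hd :: tl)⟩ tl hd := by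
        simp [mStep]
      rw [this]
      exact hy
  | cool => exact hstrongcase (fun n => by simp only [mStep])

theorem sig_cover (a : List ℕ) :
    (sig V B (Y := Y) a).W ⊆ ⋃ n : ℕ, (sig V B (a ++ [n])).W := by
  intro y hy
  obtain ⟨n, hn⟩ := Set.mem_iUnion.mp (mStep_cover V B (sig_good V B a) hy)
  exact Set.mem_iUnion.mpr ⟨n, by rw [sig_append]; exact hn⟩

/-- Following the path of a busy node keeps the attached open set. -/
theorem follow_busy : ∀ (e a' : List ℕ), (sig V B (Y := Y) a').mode = SMode.busy e →
    (sig V B (Y := Y) (a' ++ e)).W = (sig V B (Y := Y) a').W := by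
  intro e
  induction e with
  | nil => intro a' _; rw [List.append_nil]
  | cons hd tl ih =>
    intro a' hmode
    have hstep : sig V B (Y := Y) (a' ++ [hd]) =
        pathChild (sig V B (Y := Y) a') tl hd := by
      rw [sig_append]
      generalize hsa : sig V B (Y := Y) a' = s at hmode ⊢
      obtain ⟨nd, W, t, md⟩ := s
      change md = SMode.busy (hd :: tl) at hmode
      subst hmode
      show mStep V B ⟨nd, W, t, SMode.busy (hd :: tl)⟩ hd = _
      simp [mStep]
    have hassoc : a' ++ hd :: tl = (a' ++ [hd]) ++ tl := by simp
    rcases tl with _ | ⟨u, ul⟩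
    · rw [hassoc, List.append_nil, hstep]
      rfl
    · have hmode' : (sig V B (Y := Y) (a' ++ [hd])).mode = SMode.busy (u :: ul) := by
        rw [hstep]; rfl
      rw [hassoc, ih _ hmode', hstep]
      rfl

/-- Following a freshly triggered witness path keeps the attached open set. -/
theorem follow_wit (a : List ℕ) (hmode : (sig V B (Y := Y) a).mode = SMode.cap)
    (htrig : (B (sig V B (Y := Y) a).t ∩ V a).Nonempty) :
    (sig V B (Y := Y) (a ++ wit V (B (sig V B (Y := Y) a).t) a)).W = (sig V B a).W := by
  rcases hw : wit V (B (sig V B (Y := Y) a).t) a with _ | ⟨hd, tl⟩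
  · rw [List.append_nil]
  · have hnode := sig_node V B (Y := Y) a
    have hstep : sig V B (Y := Y) (a ++ [hd]) = pathChild (sig V B (Y := Y) a) tl hd := by
      rw [sig_append]
      generalize hsa : sig V B (Y := Y) a = s at hmode htrig hw hnode ⊢
      obtain ⟨nd, W, t, md⟩ := s
      change nd = a at hnode
      subst hnode
      change md = SMode.cap at hmode
      subst hmode
      change (B t ∩ V nd).Nonempty at htrig
      change wit V (B t) nd = hd :: tl at hw
      show mStep V B ⟨nd, W, t, SMode.cap⟩ hd = _
      simp [mStep, htrig, hw]
    have hassoc : a ++ hd :: tl = (a ++ [hd]) ++ tl := by simp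
    rcases tl with _ | ⟨u, ul⟩
    · rw [hassoc, List.append_nil, hstep]
      rfl
    · have hmode' : (sig V B (Y := Y) (a ++ [hd])).mode = SMode.busy (u :: ul) := by
        rw [hstep]; rfl
      rw [hassoc, follow_busy V B _ _ hmode', hstep]
      rfl

theorem sig_restrict_succ (q : ℕ → ℕ) (m : ℕ) :
    sig V B (Y := Y) (restrictSeq q (m + 1)) = mStep V B (sig V B (Y := Y) (restrictSeq q m)) (q m) := by
  rw [restrictSeq_succ', sig_append]

/-- Along every branch there is a later strong step. -/
theorem exists_strong_step (q : ℕ → ℕ) (m : ℕ) :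
    ∃ M, m < M ∧
      (sig V B (Y := Y) (restrictSeq q M)).t = (sig V B (Y := Y) (restrictSeq q m)).t + 1 ∧
      (sig V B (Y := Y) (restrictSeq q M)).mode = SMode.cap ∧
      closure (sig V B (Y := Y) (restrictSeq q M)).W ⊆ (sig V B (Y := Y) (restrictSeq q m)).W := by
  generalize hν : nuSt V B (sig V B (Y := Y) (restrictSeq q m)) = ν
  induction ν using Nat.strong_induction_on generalizing m with
  | _ ν ih =>
  subst hν
  rcases mStep_t_or V B (sig V B (Y := Y) (restrictSeq q m)) (q m) with
    ⟨ht, hW, hν⟩ | ⟨ht, hmode, hW⟩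
  · obtain ⟨M, hM, ht', hmode', hcl⟩ := ih _ (by rw [← sig_restrict_succ] at hν; exact hν)
      (m + 1) (by rw [sig_restrict_succ])
    rw [← sig_restrict_succ] at ht hW
    refine ⟨M, by omega, by rw [ht', ht], hmode', ?_⟩
    rw [← hW]
    exact hcl
  · refine ⟨m + 1, by omega, ?_, ?_, ?_⟩
    · rw [sig_restrict_succ]; exact ht
    · rw [sig_restrict_succ]; exact hmode
    · rw [sig_restrict_succ, hW]
      have hg := sig_good V B (Y := Y) (restrictSeq q m)
      exact (sCov_spec hg.1 hg.2.1 _).2.2.1 _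

/-- Every counter value is attained at a capable node along every branch. -/
theorem exists_cap_at (q : ℕ → ℕ) (k : ℕ) :
    ∃ m, (sig V B (Y := Y) (restrictSeq q m)).t = k ∧
      (sig V B (Y := Y) (restrictSeq q m)).mode = SMode.cap := by
  induction k with
  | zero => exact ⟨0, rfl, rfl⟩
  | succ k ih =>
    obtain ⟨m, ht, -⟩ := ih
    obtain ⟨M, -, ht', hmode', -⟩ := exists_strong_step V B (Y := Y) q m
    exact ⟨M, by rw [ht', ht], hmode'⟩

theorem sig_t_mono (q : ℕ → ℕ) {m m' : ℕ} (h : m ≤ m') :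
    (sig V B (Y := Y) (restrictSeq q m)).t ≤ (sig V B (Y := Y) (restrictSeq q m')).t := by
  induction m' with
  | zero =>
    have : m = 0 := by omega
    subst this; exact le_rfl
  | succ m' ih =>
    rcases Nat.lt_or_ge m (m' + 1) with h' | h'
    · have h1 := ih (by omega)
      rcases mStep_t_or V B (sig V B (Y := Y) (restrictSeq q m')) (q m') with ⟨ht, -, -⟩ | ⟨ht, -, -⟩ <;>
        rw [sig_restrict_succ, ht] <;> omega
    · have : m = m' + 1 := by omega
      subst this; rfl

theorem sig_t_unbounded (q : ℕ → ℕ) (k : ℕ) :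
    ∃ m0, ∀ m ≥ m0, k ≤ (sig V B (Y := Y) (restrictSeq q m)).t := by
  obtain ⟨m0, ht, -⟩ := exists_cap_at V B (Y := Y) q k
  exact ⟨m0, fun m hm => ht ▸ sig_t_mono V B (Y := Y) q hm⟩

theorem sig_W_anti_branch (q : ℕ → ℕ) {m m' : ℕ} (h : m ≤ m') :
    (sig V B (Y := Y) (restrictSeq q m')).W ⊆ (sig V B (Y := Y) (restrictSeq q m)).W :=
  sig_W_anti V B (restrictSeq_prefix' q h)

theorem branch_limit (q : ℕ → ℕ) :
    ∃! y : Y, ∀ m : ℕ, y ∈ closure (sig V B (Y := Y) (restrictSeq q m)).W := by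
  have hgood : ∀ m, GoodSt (sig V B (Y := Y) (restrictSeq q m)) :=
    fun m => sig_good V B _
  choose ys hys using fun m => (hgood m).2.1
  have key : ∀ k : ℕ, 1 ≤ k → ∃ N, ∀ y1 y2 : Y,
      y1 ∈ closure (sig V B (Y := Y) (restrictSeq q N)).W →
      y2 ∈ closure (sig V B (Y := Y) (restrictSeq q N)).W →
      dist y1 y2 ≤ (1/2 : ℝ) ^ k := by
    intro k hk
    obtain ⟨N, htN, -⟩ := exists_cap_at V B (Y := Y) q k
    refine ⟨N, fun y1 y2 h1 h2 => ?_⟩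
    obtain ⟨hb, hd⟩ := (hgood N).2.2 (by omega)
    calc dist y1 y2 ≤ Metric.diam (closure (sig V B (Y := Y) (restrictSeq q N)).W) :=
          Metric.dist_le_diam_of_mem hb.closure h1 h2
      _ = Metric.diam (sig V B (Y := Y) (restrictSeq q N)).W := Metric.diam_closure _
      _ ≤ (1/2 : ℝ) ^ (sig V B (Y := Y) (restrictSeq q N)).t := hd
      _ = (1/2 : ℝ) ^ k := by rw [htN]
  have hcauchy : CauchySeq ys := by
    rw [Metric.cauchySeq_iff']
    intro ε hε
    obtain ⟨k, hklt⟩ := exists_pow_lt_of_lt_one hε (by norm_num : (1/2 : ℝ) < 1)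
    obtain ⟨N, hN⟩ := key (k + 1) (by omega)
    refine ⟨N, fun n hn => ?_⟩
    have h1 : dist (ys n) (ys N) ≤ (1/2 : ℝ) ^ (k + 1) :=
      hN _ _ (subset_closure (sig_W_anti_branch V B (Y := Y) q hn (hys n)))
        (subset_closure (hys N))
    have h2 : ((1:ℝ)/2) ^ (k+1) ≤ (1/2 : ℝ) ^ k :=
      pow_le_pow_of_le_one (by norm_num) (by norm_num) (by omega)
    linarith
  obtain ⟨yy, hyy⟩ := cauchySeq_tendsto_of_complete hcauchy
  refine ⟨yy, fun m => ?_, fun z hz => ?_⟩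
  · refine mem_closure_of_tendsto hyy ?_
    filter_upwards [Filter.eventually_ge_atTop m] with n hn
    exact sig_W_anti_branch V B (Y := Y) q hn (hys n)
  · have hyy' : ∀ m : ℕ, yy ∈ closure (sig V B (Y := Y) (restrictSeq q m)).W := by
      intro m
      refine mem_closure_of_tendsto hyy ?_
      filter_upwards [Filter.eventually_ge_atTop m] with n hn
      exact sig_W_anti_branch V B (Y := Y) q hn (hys n)
    have : ∀ k : ℕ, 1 ≤ k → dist z yy ≤ (1/2 : ℝ) ^ k := by
      intro k hk
      obtain ⟨N, hN⟩ := key k hk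
      exact hN _ _ (hz N) (hyy' N)
    have hdz : dist z yy ≤ 0 := by
      refine le_of_forall_pos_le_add ?_
      intro ε hε
      obtain ⟨k, hklt⟩ := exists_pow_lt_of_lt_one hε (by norm_num : (1/2 : ℝ) < 1)
      have := this (k + 1) (by omega)
      have h2 : ((1:ℝ)/2) ^ (k+1) ≤ (1/2 : ℝ) ^ k :=
        pow_le_pow_of_le_one (by norm_num) (by norm_num) (by omega)
      linarith
    have := dist_nonneg (x := z) (y := yy)
    have : dist z yy = 0 := le_antisymm hdz this
    exact dist_eq_zero.mp this

noncomputable def gb (q : ℕ → ℕ) : Y := (branch_limit V B (Y := Y) q).exists.choose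

theorem gb_spec (q : ℕ → ℕ) (m : ℕ) :
    gb V B (Y := Y) q ∈ closure (sig V B (Y := Y) (restrictSeq q m)).W :=
  (branch_limit V B (Y := Y) q).exists.choose_spec m

theorem gb_unique {q : ℕ → ℕ} {y : Y}
    (hy : ∀ m : ℕ, y ∈ closure (sig V B (Y := Y) (restrictSeq q m)).W) :
    y = gb V B (Y := Y) q := by
  obtain ⟨z, hz, huniq⟩ := branch_limit V B (Y := Y) q
  rw [huniq y hy, huniq (gb V B (Y := Y) q) (fun m => gb_spec V B q m)]

theorem gb_mem_open (q : ℕ → ℕ) (m : ℕ) :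
    gb V B (Y := Y) q ∈ (sig V B (Y := Y) (restrictSeq q m)).W := by
  obtain ⟨M, -, -, -, hcl⟩ := exists_strong_step V B (Y := Y) q m
  exact hcl (gb_spec V B q M)

/-- The constructed map. -/
noncomputable def ff (x : X) : Y := gb V B (Y := Y) (phi V x)

theorem ff_continuous (hO : OpenScheme V) (hP : Partitions V Set.univ) :
    Continuous (ff V B (Y := Y)) := by
  rw [continuous_iff_continuousAt]
  intro x
  rw [ContinuousAt, Metric.tendsto_nhds]
  intro ε hε
  obtain ⟨k, hklt⟩ := exists_pow_lt_of_lt_one hε (by norm_num : (1/2 : ℝ) < 1)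
  obtain ⟨m, htm, -⟩ := exists_cap_at V B (Y := Y) (phi V x) (k + 1)
  have hxa : x ∈ V (restrictSeq (phi V x) m) := mem_V_restrict_phi hP x m
  filter_upwards [(hO (restrictSeq (phi V x) m)).mem_nhds hxa] with x' hx'
  have hres : restrictSeq (phi V x') m = restrictSeq (phi V x) m := by
    have := phi_restrict_eq hP hx'
    rwa [restrictSeq_length'] at this
  have h1 : ff V B (Y := Y) x' ∈ closure (sig V B (Y := Y) (restrictSeq (phi V x) m)).W := by
    rw [← hres]
    exact gb_spec V B (phi V x') m
  have h2 : ff V B (Y := Y) x ∈ closure (sig V B (Y := Y) (restrictSeq (phi V x) m)).W :=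
    gb_spec V B (phi V x) m
  obtain ⟨hb, hd⟩ := (sig_good V B (Y := Y) (restrictSeq (phi V x) m)).2.2 (by omega)
  have hdist : dist (ff V B (Y := Y) x') (ff V B (Y := Y) x) ≤ (1/2 : ℝ) ^ (k + 1) := by
    calc dist (ff V B (Y := Y) x') (ff V B (Y := Y) x)
        ≤ Metric.diam (closure (sig V B (Y := Y) (restrictSeq (phi V x) m)).W) :=
          Metric.dist_le_diam_of_mem hb.closure h1 h2
      _ = Metric.diam (sig V B (Y := Y) (restrictSeq (phi V x) m)).W := Metric.diam_closure _
      _ ≤ (1/2 : ℝ) ^ (sig V B (Y := Y) (restrictSeq (phi V x) m)).t := hd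
      _ = (1/2 : ℝ) ^ (k + 1) := by rw [htm]
  have h3 : ((1:ℝ)/2) ^ (k+1) ≤ (1/2 : ℝ) ^ k :=
    pow_le_pow_of_le_one (by norm_num) (by norm_num) (by omega)
  calc dist (ff V B (Y := Y) x') (ff V B (Y := Y) x) ≤ (1/2 : ℝ) ^ (k+1) := hdist
    _ ≤ (1/2 : ℝ) ^ k := h3
    _ < ε := hklt

open Classical in
noncomputable def extL (c : List ℕ) (y : Y) : ℕ → List ℕ
  | 0 => c
  | n + 1 => extL c y n ++
      [if h : ∃ i : ℕ, y ∈ (sig V B (extL c y n ++ [i])).W then h.choose else 0]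

theorem extL_spec {c : List ℕ} {y : Y} (hy : y ∈ (sig V B (Y := Y) c).W) :
    ∀ n, y ∈ (sig V B (Y := Y) (extL V B c y n)).W := by
  intro n
  induction n with
  | zero => exact hy
  | succ n ih =>
    have hex : ∃ i : ℕ, y ∈ (sig V B (Y := Y) (extL V B c y n ++ [i])).W :=
      Set.mem_iUnion.mp (sig_cover V B _ ih)
    show y ∈ (sig V B (Y := Y) (extL V B c y n ++ [_])).W
    rw [dif_pos hex]
    exact hex.choose_spec

theorem extL_length (c : List ℕ) (y : Y) (n : ℕ) :
    (extL V B (Y := Y) c y n).length = c.length + n := by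
  induction n with
  | zero => rfl
  | succ n ih => show (extL V B c y n ++ [_]).length = _; simp [ih]; omega

theorem extL_prefix_le (c : List ℕ) (y : Y) {i j : ℕ} (h : i ≤ j) :
    extL V B (Y := Y) c y i <+: extL V B (Y := Y) c y j := by
  induction j with
  | zero =>
    have : i = 0 := by omega
    subst this; exact List.prefix_refl _
  | succ j ih =>
    rcases Nat.lt_or_ge i (j + 1) with h' | h'
    · refine (ih (by omega)).trans ?_
      exact ⟨[_], rfl⟩
    · have : i = j + 1 := by omega
      subst this; exact List.prefix_refl _

noncomputable def extQ (c : List ℕ) (y : Y) : ℕ → ℕ :=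
  fun n => (extL V B (Y := Y) c y (n + 1)).getD n 0

theorem restrict_extQ (c : List ℕ) (y : Y) :
    ∀ m, restrictSeq (extQ V B (Y := Y) c y) m = (extL V B (Y := Y) c y m).take m := by
  intro m
  induction m with
  | zero => simp [restrictSeq]
  | succ m ih =>
    rw [restrictSeq_succ', ih]
    have hlen : m < (extL V B (Y := Y) c y (m + 1)).length := by
      rw [extL_length]; omega
    have e1 : extQ V B (Y := Y) c y m = (extL V B (Y := Y) c y (m + 1))[m] :=
      List.getD_eq_getElem _ _ hlen
    have e2 : (extL V B (Y := Y) c y (m + 1)).take (m + 1) =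
        (extL V B (Y := Y) c y (m + 1)).take m ++ [(extL V B (Y := Y) c y (m + 1))[m]] := by
      rw [List.take_succ, List.getElem?_eq_getElem hlen]
      rfl
    have e3 : (extL V B (Y := Y) c y (m + 1)).take m = (extL V B (Y := Y) c y m).take m := by
      show ((extL V B (Y := Y) c y m) ++ [_]).take m = _
      exact List.take_append_of_le_length (by rw [extL_length]; omega)
    rw [e2, e3, e1]

theorem restrict_extQ_full (c : List ℕ) (y : Y) (n : ℕ) :
    restrictSeq (extQ V B (Y := Y) c y) (c.length + n) = extL V B (Y := Y) c y n := by
  rw [restrict_extQ]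
  have hpre : extL V B (Y := Y) c y n <+: extL V B (Y := Y) c y (c.length + n) :=
    extL_prefix_le V B c y (by omega)
  have := List.prefix_iff_eq_take.mp hpre
  rw [extL_length] at this
  exact this.symm

theorem W_subset_image (hP : Partitions V Set.univ) (hS : StrictBranches V) (c : List ℕ) :
    (sig V B (Y := Y) c).W ⊆ ff V B (Y := Y) '' (V c) := by
  intro y hy
  set q := extQ V B (Y := Y) c y with hqdef
  have hc0 : restrictSeq q c.length = c := by
    have := restrict_extQ_full V B (Y := Y) c y 0
    simpa [extL] using this
  have hall : ∀ m, y ∈ (sig V B (Y := Y) (restrictSeq q m)).W := by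
    intro m
    rcases le_or_gt m c.length with h | h
    · have hpre : restrictSeq q m <+: restrictSeq q c.length := restrictSeq_prefix' _ h
      rw [hc0] at hpre
      exact sig_W_anti V B hpre hy
    · have hm : m = c.length + (m - c.length) := by omega
      rw [hm, restrict_extQ_full]
      exact extL_spec V B hy _
  have hq : y = gb V B (Y := Y) q := gb_unique V B (fun m => subset_closure (hall m))
  obtain ⟨x', hx'⟩ := hS q
  have hx'm : ∀ m, x' ∈ V (restrictSeq q m) := by
    intro m
    have hmem : x' ∈ fruit V q := by rw [hx']; exact rfl
    exact Set.mem_iInter.mp hmem m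
  have hres : ∀ m, restrictSeq (phi V x') m = restrictSeq q m := by
    intro m
    have := phi_restrict_eq hP (hx'm m)
    rwa [restrictSeq_length'] at this
  have hffx' : ff V B (Y := Y) x' = gb V B (Y := Y) q :=
    gb_unique V B (fun m => by rw [← hres m]; exact gb_spec V B (phi V x') m)
  have hx'c : x' ∈ V c := by
    have := hx'm c.length
    rwa [hc0] at this
  exact ⟨x', hx'c, by rw [hffx', ← hq]⟩

theorem ff_surjective (hP : Partitions V Set.univ) (hS : StrictBranches V) :
    Function.Surjective (ff V B (Y := Y)) := by
  intro y
  have hy : y ∈ (sig V B (Y := Y) ([] : List ℕ)).W := by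
    rw [sig_nil]; exact Set.mem_univ y
  obtain ⟨x, -, hx⟩ := W_subset_image V B hP hS [] hy
  exact ⟨x, hx⟩

theorem ff_open_aux (hO : OpenScheme V) (hP : Partitions V Set.univ) (hS : StrictBranches V)
    (hPB : IsPiBase {S : Set X | ∃ a : List ℕ, S = V a})
    (hB : ∀ k, IsOpen (B k)) {U : Set X} (hU : IsOpen U) {x : X} (hxU : x ∈ U)
    {k : ℕ} (hxB : x ∈ B k) (hBU : B k ⊆ U) :
    ∃ O : Set Y, IsOpen O ∧ ff V B (Y := Y) x ∈ O ∧ O ⊆ ff V B (Y := Y) '' U := by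
  obtain ⟨m, htm, hmode⟩ := exists_cap_at V B (Y := Y) (phi V x) k
  set a := restrictSeq (phi V x) m with ha
  have hxa : x ∈ V a := mem_V_restrict_phi hP x m
  have htrig : (B k ∩ V a).Nonempty := ⟨x, hxB, hxa⟩
  have htrig' : (B (sig V B (Y := Y) a).t ∩ V a).Nonempty := by rw [htm]; exact htrig
  have hWeq := follow_wit V B a hmode htrig'
  have hwitsub : V (a ++ wit V (B (sig V B (Y := Y) a).t) a) ⊆ B k := by
    rw [htm]
    exact wit_spec (exists_extension_subset hP hS hPB hO a (hB k) htrig)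
  refine ⟨(sig V B (Y := Y) a).W, (sig_good V B (Y := Y) a).1,
    gb_mem_open V B (phi V x) m, ?_⟩
  rw [← hWeq]
  exact (W_subset_image V B hP hS _).trans (Set.image_mono (hwitsub.trans hBU))

theorem ff_isOpenMap (hO : OpenScheme V) (hP : Partitions V Set.univ) (hS : StrictBranches V)
    (hPB : IsPiBase {S : Set X | ∃ a : List ℕ, S = V a})
    (hB : ∀ k, IsOpen (B k))
    (hBbase : ∀ (U : Set X), IsOpen U → ∀ x ∈ U, ∃ k, x ∈ B k ∧ B k ⊆ U) :
    IsOpenMap (ff V B (Y := Y)) := by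
  intro U hU
  rw [isOpen_iff_forall_mem_open]
  rintro z ⟨x, hxU, rfl⟩
  obtain ⟨k, hxB, hBU⟩ := hBbase U hU x hxU
  obtain ⟨O, hO1, hO2, hO3⟩ := ff_open_aux V B (Y := Y) hO hP hS hPB hB hU hxU hxB hBU
  exact ⟨O, hO3, hO1, hO2⟩

end Machine

end Aux

/-- If X is a second-countable π-space, then there is a continuous open
surjection from X onto every nonempty Polish space. -/
theorem statement5 {X : Type} [TopologicalSpace X] [SecondCountableTopology X]
    (h : IsPiSpace X) (Y : Type) [TopologicalSpace Y] [PolishSpace Y] [Nonempty Y] :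
    ∃ f : X → Y, Continuous f ∧ IsOpenMap f ∧ Function.Surjective f := by
  obtain ⟨V, hO, hP, hS, hPB⟩ := h
  letI := TopologicalSpace.upgradeIsCompletelyMetrizable Y
  have hXne : Nonempty X := by
    obtain ⟨x, -⟩ := strict_nonempty hS []
    exact ⟨x⟩
  obtain ⟨bb, hbc, -, hbb⟩ := TopologicalSpace.exists_countable_basis X
  have hbbne : bb.Nonempty := by
    obtain ⟨x⟩ := hXne
    obtain ⟨v, hv, -, -⟩ := hbb.exists_subset_of_mem_open (Set.mem_univ x) isOpen_univ
    exact ⟨v, hv⟩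
  obtain ⟨B, hB⟩ := hbc.exists_eq_range hbbne
  have hBopen : ∀ k, IsOpen (B k) :=
    fun k => hbb.isOpen (by rw [hB]; exact Set.mem_range_self k)
  have hBbase : ∀ (U : Set X), IsOpen U → ∀ x ∈ U, ∃ k, x ∈ B k ∧ B k ⊆ U := by
    intro U hU x hx
    obtain ⟨v, hv, hxv, hvU⟩ := hbb.exists_subset_of_mem_open hx hU
    rw [hB] at hv
    obtain ⟨k, rfl⟩ := hv
    exact ⟨k, hxv, hvU⟩
  exact ⟨ff V B, ff_continuous V B hO hP,
    ff_isOpenMap V B hO hP hS hPB hBopen hBbase, ff_surjective V B hP hS⟩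

end PiSpacePaper
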